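/- Let T be a tree and Q ⊆ V(T) a fixed subset. Then there exist subtrees S₁ and S₂ of T that divide T (i.e., S₁ ∪ S₂ = T and S₁ and S₂ share exactly one vertex) such that |V(S₁) ∩ Q| ≥ |Q|/3 and |V(S₂) ∩ Q| ≥ |Q|/3. -/

import Mathlib

open Finset SimpleGraph

set_option linter.unusedSectionVars false

namespace TreeDivideAux

variable {V : Type*} [Fintype V] [DecidableEq V] {T : SimpleGraph V}

/-- The branch of `T - c` through the neighbour `n` of `c`. -/
noncomputable def branch (T : SimpleGraph V) (c n : V) : Finset V :=
  Finset.univ.filter (fun x => T.dist n x < T.dist c x)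

lemma mem_branch {c n x : V} : x ∈ branch T c n ↔ T.dist n x < T.dist c x := by
  simp [branch]

lemma dist_split (hT : T.Connected) {u v y : V} (p : T.Walk u v)
    (hp : p.length = T.dist u v) (hy : y ∈ p.support) :
    T.dist u y + T.dist y v = T.dist u v := by
  have h1 : T.dist u y ≤ (p.takeUntil y hy).length := SimpleGraph.dist_le _
  have h2 : T.dist y v ≤ (p.dropUntil y hy).length := SimpleGraph.dist_le _
  have h3 : (p.takeUntil y hy).length + (p.dropUntil y hy).length = p.length := by
    rw [← SimpleGraph.Walk.length_append, p.take_spec hy]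
  have h4 := hT.dist_triangle (u := u) (v := y) (w := v)
  omega

lemma adj_dist_ne (hT : T.IsTree) (q : V) {u v : V} (h : T.Adj u v) :
    T.dist q u ≠ T.dist q v := by
  intro hd
  obtain ⟨p, hp, hlen⟩ := hT.isConnected.exists_path_of_dist q u
  have hv : v ∉ p.support := by
    intro hv
    have := dist_split hT.isConnected p hlen hv
    have h1 : T.dist v u = 1 := by
      rw [SimpleGraph.dist_eq_one_iff_adj]; exact h.symm
    omega
  have hq1 : (SimpleGraph.Walk.cons h.symm p.reverse).IsPath := by
    rw [SimpleGraph.Walk.cons_isPath_iff]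
    exact ⟨hp.reverse, by simpa using hv⟩
  obtain ⟨r, hr, hrlen⟩ := hT.isConnected.exists_path_of_dist v q
  have := hT.IsAcyclic.path_unique ⟨_, hq1⟩ ⟨r, hr⟩
  apply_fun (fun z => z.1.length) at this
  simp only [SimpleGraph.Walk.length_cons, SimpleGraph.Walk.length_reverse] at this
  rw [hlen] at this
  rw [SimpleGraph.dist_comm (u := v) (v := q)] at hrlen
  omega

lemma adj_dist_cases (hT : T.IsTree) (q : V) {u v : V} (h : T.Adj u v) :
    T.dist q v = T.dist q u + 1 ∨ T.dist q u = T.dist q v + 1 := by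
  have h1 : T.dist u v = 1 := SimpleGraph.dist_eq_one_iff_adj.mpr h
  have h2 := hT.isConnected.dist_triangle (u := q) (v := u) (w := v)
  have h3 := hT.isConnected.dist_triangle (u := q) (v := v) (w := u)
  rw [SimpleGraph.dist_comm (u := v) (v := u)] at h3
  have h4 := adj_dist_ne hT q h
  omega

lemma branch_iff_dist (hT : T.IsTree) {c n : V} (hcn : T.Adj c n) (x : V) :
    x ∈ branch T c n ↔ T.dist c x = T.dist n x + 1 := by
  rw [mem_branch]
  have := adj_dist_cases hT x hcn
  rw [SimpleGraph.dist_comm (u := x) (v := n), SimpleGraph.dist_comm (u := x) (v := c)] at this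
  omega

lemma not_branch_iff_dist (hT : T.IsTree) {c n : V} (hcn : T.Adj c n) (x : V) :
    x ∉ branch T c n ↔ T.dist n x = T.dist c x + 1 := by
  rw [mem_branch]
  have := adj_dist_cases hT x hcn
  rw [SimpleGraph.dist_comm (u := x) (v := n), SimpleGraph.dist_comm (u := x) (v := c)] at this
  omega

lemma not_mem_branch_self {c n : V} : c ∉ branch T c n := by
  rw [mem_branch, SimpleGraph.dist_self]; omega

lemma mem_branch_ne {c n x : V} (hx : x ∈ branch T c n) : x ≠ c := by
  rintro rfl; exact not_mem_branch_self hx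

lemma nbr_mem_branch {c n : V} (hT : T.IsTree) (hcn : T.Adj c n) : n ∈ branch T c n := by
  rw [mem_branch, SimpleGraph.dist_self]
  exact hT.isConnected.pos_dist_of_ne hcn.ne

lemma mem_branch_of_walk {c n x : V} (p : T.Walk n x) (hlen : p.length + 1 = T.dist c x) :
    x ∈ branch T c n := by
  rw [mem_branch]
  have := SimpleGraph.dist_le p
  omega

lemma branch_disjoint (hT : T.IsTree) {c n n' x : V} (h1 : T.Adj c n) (h2 : T.Adj c n')
    (hx : x ∈ branch T c n) (hx' : x ∈ branch T c n') : n = n' := by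
  have hd := (branch_iff_dist hT h1 x).mp hx
  have hd' := (branch_iff_dist hT h2 x).mp hx'
  obtain ⟨p, hp, hplen⟩ := hT.isConnected.exists_path_of_dist n x
  obtain ⟨q, hq, hqlen⟩ := hT.isConnected.exists_path_of_dist n' x
  have hP : (SimpleGraph.Walk.cons h1 p).length = T.dist c x := by
    simp [SimpleGraph.Walk.length_cons, hplen]; omega
  have hQ : (SimpleGraph.Walk.cons h2 q).length = T.dist c x := by
    simp [SimpleGraph.Walk.length_cons, hqlen]; omega
  have hPp := SimpleGraph.Walk.isPath_of_length_eq_dist _ hP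
  have hQp := SimpleGraph.Walk.isPath_of_length_eq_dist _ hQ
  have := hT.IsAcyclic.path_unique ⟨_, hPp⟩ ⟨_, hQp⟩
  apply_fun (fun z => z.1.support) at this
  rw [SimpleGraph.Walk.support_cons, SimpleGraph.Walk.support_cons,
    p.support_eq_cons, q.support_eq_cons] at this
  simp only [List.cons.injEq] at this
  exact this.2.1

lemma exists_branch (hT : T.IsTree) {c x : V} (hx : x ≠ c) :
    ∃ n, T.Adj c n ∧ x ∈ branch T c n := by
  have hd : 0 < T.dist c x := hT.isConnected.pos_dist_of_ne (Ne.symm hx)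
  obtain ⟨p, hplen⟩ := hT.isConnected.exists_walk_length_eq_dist c x
  cases p with
  | nil => simp at hx
  | cons h q =>
    refine ⟨_, h, mem_branch_of_walk q ?_⟩
    rw [SimpleGraph.Walk.length_cons] at hplen
    omega

lemma branch_walk_support (hT : T.IsTree) {c n x : V} (hcn : T.Adj c n)
    (hx : x ∈ branch T c n) :
    ∃ p : T.Walk c x, ∀ y ∈ p.support, y = c ∨ y ∈ branch T c n := by
  have hd := (branch_iff_dist hT hcn x).mp hx
  obtain ⟨p, hplen⟩ := hT.isConnected.exists_walk_length_eq_dist c x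
  cases p with
  | nil => exact absurd rfl (Ne.symm (mem_branch_ne hx))
  | cons h q =>
    rename_i m
    rw [SimpleGraph.Walk.length_cons] at hplen
    have hxm : x ∈ branch T c m := mem_branch_of_walk q hplen
    obtain rfl : m = n := branch_disjoint hT h hcn hxm hx
    refine ⟨SimpleGraph.Walk.cons h q, ?_⟩
    intro y hy
    rw [SimpleGraph.Walk.support_cons, List.mem_cons] at hy
    rcases hy with rfl | hy
    · exact Or.inl rfl
    · right
      by_contra hyn
      have h1 := (not_branch_iff_dist hT hcn y).mp hyn
      have hqlen : q.length = T.dist m x := by omega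
      have h2 := dist_split hT.isConnected q hqlen hy
      have h3 := hT.isConnected.dist_triangle (u := c) (v := y) (w := x)
      have h4 : T.dist c x ≤ T.dist c y + T.dist y x := h3
      omega

lemma induce_reachable {S : Set V} {u v : V} (p : T.Walk u v)
    (hs : ∀ y ∈ p.support, y ∈ S) (hu : u ∈ S) (hv : v ∈ S) :
    (T.induce S).Reachable ⟨u, hu⟩ ⟨v, hv⟩ := by
  induction p with
  | nil => rfl
  | @cons a b c h q ih =>
    have hb : b ∈ S := hs b (by simp)
    have h1 : (T.induce S).Adj ⟨a, hu⟩ ⟨b, hb⟩ := h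
    refine h1.reachable.trans (ih ?_ hb hv)
    intro y hy
    exact hs y (by rw [SimpleGraph.Walk.support_cons]; exact List.mem_cons_of_mem _ hy)

/-- the part of the tree consisting of `c` together with the branches through `N`. -/
noncomputable def part (T : SimpleGraph V) (c : V) (N : Finset V) : Finset V :=
  insert c (N.biUnion (branch T c))

lemma c_mem_part {c : V} {N : Finset V} : c ∈ part T c N := Finset.mem_insert_self _ _

lemma mem_part_iff {c x : V} {N : Finset V} :
    x ∈ part T c N ↔ x = c ∨ ∃ n ∈ N, x ∈ branch T c n := by
  simp [part]

lemma part_connected (hT : T.IsTree) {c : V} {N : Finset V} (hN : ∀ n ∈ N, T.Adj c n) :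
    (T.induce (↑(part T c N) : Set V)).Connected := by
  have hc : c ∈ (↑(part T c N) : Set V) := by simpa using c_mem_part
  rw [connected_iff_exists_forall_reachable]
  refine ⟨⟨c, hc⟩, ?_⟩
  rintro ⟨z, hz⟩
  refine SimpleGraph.Reachable.symm ?_
  simp only [Finset.coe_insert, Set.mem_insert_iff, Finset.mem_coe, part] at hz
  rcases hz with rfl | hz
  · rfl
  · rw [Finset.mem_biUnion] at hz
    obtain ⟨n, hn, hzb⟩ := hz
    obtain ⟨p, hp⟩ := branch_walk_support hT (hN n hn) hzb
    have hsup : ∀ y ∈ p.support, y ∈ (↑(part T c N) : Set V) := by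
      intro y hy
      rcases hp y hy with rfl | hyb
      · simpa using c_mem_part
      · simp only [Finset.mem_coe, mem_part_iff]
        exact Or.inr ⟨n, hn, hyb⟩
    exact (induce_reachable p hsup hc _).symm

lemma mem_branch_adj (hT : T.IsTree) {c m u v : V} (hm : T.Adj c m)
    (hu : u ∈ branch T c m) (h : T.Adj u v) (hd : T.dist c v = T.dist c u + 1) :
    v ∈ branch T c m := by
  have hdu : 0 < T.dist c u := by
    have := mem_branch.mp hu; omega
  obtain ⟨p, hplen⟩ := hT.isConnected.exists_walk_length_eq_dist c u
  cases p with
  | nil => rw [SimpleGraph.dist_self] at hdu; omega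
  | cons h' q =>
    rename_i m'
    rw [SimpleGraph.Walk.length_cons] at hplen
    have hum' : u ∈ branch T c m' := mem_branch_of_walk q hplen
    obtain rfl : m' = m := branch_disjoint hT h' hm hum' hu
    refine mem_branch_of_walk (q.concat h) ?_
    rw [SimpleGraph.Walk.length_concat]
    omega

lemma adj_same_branch (hT : T.IsTree) {c u v m n : V} (h : T.Adj u v) (hm : T.Adj c m)
    (hn : T.Adj c n) (hu : u ∈ branch T c m) (hv : v ∈ branch T c n) : m = n := by
  rcases adj_dist_cases hT c h with hd | hd
  · exact branch_disjoint hT hm hn (mem_branch_adj hT hm hu h hd) hv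
  · exact (branch_disjoint hT hn hm (mem_branch_adj hT hn hv h.symm hd) hu).symm

lemma mem_part_of_branch {c n x : V} {N : Finset V} (hn : n ∈ N) (hx : x ∈ branch T c n) :
    x ∈ part T c N := mem_part_iff.mpr (Or.inr ⟨n, hn, hx⟩)

lemma card_part_inter (hT : T.IsTree) {c : V} {N : Finset V} (hN : ∀ n ∈ N, T.Adj c n)
    (Q : Finset V) :
    (part T c N ∩ Q).card = (({c} : Finset V) ∩ Q).card + ∑ n ∈ N, (branch T c n ∩ Q).card := by
  have h1 : part T c N ∩ Q = (({c} : Finset V) ∩ Q) ∪ (N.biUnion (fun n => branch T c n ∩ Q)) := by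
    ext x
    simp only [Finset.mem_inter, Finset.mem_union, Finset.mem_biUnion, Finset.mem_singleton,
      mem_part_iff]
    constructor
    · rintro ⟨h | ⟨n, hn, hb⟩, hq⟩
      · exact Or.inl ⟨h, hq⟩
      · exact Or.inr ⟨n, hn, hb, hq⟩
    · rintro (⟨rfl, hq⟩ | ⟨n, hn, hb, hq⟩)
      · exact ⟨Or.inl rfl, hq⟩
      · exact ⟨Or.inr ⟨n, hn, hb⟩, hq⟩
  rw [h1, Finset.card_union_of_disjoint, Finset.card_biUnion]
  · intro n hn n' hn' hne
    rw [Function.onFun, Finset.disjoint_left]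
    intro x hx hx'
    rw [Finset.mem_inter] at hx hx'
    exact hne (branch_disjoint hT (hN n hn) (hN n' hn') hx.1 hx'.1)
  · rw [Finset.disjoint_left]
    intro x hx hx'
    rw [Finset.mem_inter, Finset.mem_singleton] at hx
    obtain ⟨rfl, -⟩ := hx
    rw [Finset.mem_biUnion] at hx'
    obtain ⟨n, -, hb⟩ := hx'
    rw [Finset.mem_inter] at hb
    exact not_mem_branch_self hb.1

lemma branch_card_le (hT : T.IsTree) {c n : V} (Q : Finset V)
    (hmin : ∀ v, (∑ q ∈ Q, T.dist c q) ≤ ∑ q ∈ Q, T.dist v q) (hcn : T.Adj c n) :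
    2 * (branch T c n ∩ Q).card ≤ Q.card := by
  have key : ∑ q ∈ Q, (T.dist n q + if q ∈ branch T c n then 1 else 0)
           = ∑ q ∈ Q, (T.dist c q + if q ∈ branch T c n then 0 else 1) := by
    apply Finset.sum_congr rfl
    intro q hq
    by_cases hb : q ∈ branch T c n
    · have := (branch_iff_dist hT hcn q).mp hb
      simp only [hb, if_true]
      omega
    · have := (not_branch_iff_dist hT hcn q).mp hb
      simp only [hb, if_false]
      omega
  rw [Finset.sum_add_distrib, Finset.sum_add_distrib] at key
  have e1 : ∑ q ∈ Q, (if q ∈ branch T c n then 1 else 0) = (branch T c n ∩ Q).card := by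
    rw [Finset.sum_ite_mem, Finset.sum_const, smul_eq_mul, mul_one, Finset.inter_comm]
  have e12 : ∑ q ∈ Q, (if q ∈ branch T c n then 1 else 0)
      + ∑ q ∈ Q, (if q ∈ branch T c n then 0 else 1) = Q.card := by
    have hpt : ∀ q ∈ Q, ((if q ∈ branch T c n then 1 else 0) : ℕ)
        + (if q ∈ branch T c n then 0 else 1) = 1 := by
      intro q _
      by_cases hb : q ∈ branch T c n <;> simp [hb]
    rw [← Finset.sum_add_distrib, Finset.sum_congr rfl hpt, Finset.sum_const, smul_eq_mul, mul_one]
  have hm := hmin n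
  omega

lemma greedy_aux {ι : Type*} [DecidableEq ι] (f : ι → ℝ) (W wc : ℝ) (hW : 0 ≤ W) (hwc : 0 ≤ wc)
    (s : Finset ι) (hf0 : ∀ i ∈ s, 0 ≤ f i) (hf2 : ∀ i ∈ s, f i ≤ W / 2) :
    ∃ A, A ⊆ s ∧ ∑ i ∈ A, f i ≤ 2 * W / 3 ∧ (W / 3 ≤ ∑ i ∈ A, f i + wc ∨ A = s) := by
  induction s using Finset.induction_on with
  | empty => exact ⟨∅, by simp, by simp; linarith, Or.inr rfl⟩
  | @insert a s ha ih =>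
    obtain ⟨A, hAs, hA2, hA3⟩ := ih (fun i hi => hf0 i (Finset.mem_insert_of_mem hi))
        (fun i hi => hf2 i (Finset.mem_insert_of_mem hi))
    rcases hA3 with h | hAeq
    · exact ⟨A, hAs.trans (Finset.subset_insert _ _), hA2, Or.inl h⟩
    · subst hAeq
      by_cases hs3 : W / 3 ≤ ∑ i ∈ A, f i + wc
      · exact ⟨A, Finset.subset_insert _ _, hA2, Or.inl hs3⟩
      · by_cases hfa : W / 3 ≤ f a
        · refine ⟨{a}, by simp, ?_, Or.inl ?_⟩
          · have := hf2 a (Finset.mem_insert_self a A)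
            rw [Finset.sum_singleton]
            linarith
          · rw [Finset.sum_singleton]
            linarith
        · refine ⟨insert a A, Finset.Subset.refl _, ?_, Or.inr rfl⟩
          rw [Finset.sum_insert ha]
          push_neg at hs3 hfa
          linarith

lemma greedy {ι : Type*} [DecidableEq ι] (f : ι → ℝ) (W wc : ℝ) (hwc : 0 ≤ wc)
    (s : Finset ι) (hf0 : ∀ i ∈ s, 0 ≤ f i) (hf2 : ∀ i ∈ s, f i ≤ W / 2)
    (hsum : ∑ i ∈ s, f i + wc = W) :
    ∃ A, A ⊆ s ∧ W / 3 ≤ ∑ i ∈ A, f i + wc ∧ ∑ i ∈ A, f i ≤ 2 * W / 3 := by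
  have hs0 : 0 ≤ ∑ i ∈ s, f i := Finset.sum_nonneg hf0
  have hW : 0 ≤ W := by linarith
  obtain ⟨A, h1, h2, h3⟩ := greedy_aux f W wc hW hwc s hf0 hf2
  refine ⟨A, h1, ?_, h2⟩
  rcases h3 with h | rfl
  · exact h
  · rw [hsum]
    linarith

end TreeDivideAux

open TreeDivideAux

/-- **Dividing a tree.** For any tree `T` and any set `Q` of vertices, there are two
subtrees `S₁, S₂` (given by their vertex sets, inducing connected subgraphs) which
divide `T`: they share exactly one vertex, every vertex of `T` lies in `S₁ ∪ S₂`,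
every edge of `T` lies inside `S₁` or inside `S₂`, and each subtree captures at least
a third of `Q`. -/
theorem tree_divide {V : Type*} [Fintype V] [DecidableEq V] (T : SimpleGraph V) (hT : T.IsTree)
    (Q : Finset V) :
    ∃ S₁ S₂ : Finset V,
      (T.induce (↑S₁ : Set V)).Connected ∧ (T.induce (↑S₂ : Set V)).Connected ∧
      S₁ ∪ S₂ = Finset.univ ∧ (S₁ ∩ S₂).card = 1 ∧
      (∀ u v : V, T.Adj u v → (u ∈ S₁ ∧ v ∈ S₁) ∨ (u ∈ S₂ ∧ v ∈ S₂)) ∧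
      (Q.card : ℝ) / 3 ≤ ((S₁ ∩ Q).card : ℝ) ∧
      (Q.card : ℝ) / 3 ≤ ((S₂ ∩ Q).card : ℝ) := by
  classical
  obtain ⟨v0⟩ := hT.isConnected.nonempty
  obtain ⟨c, -, hcmin⟩ := Finset.exists_min_image Finset.univ
    (fun v => ∑ q ∈ Q, T.dist v q) ⟨v0, Finset.mem_univ _⟩
  set s := T.neighborFinset c with hs
  have hadj : ∀ n ∈ s, T.Adj c n := fun n hn => by
    rwa [SimpleGraph.mem_neighborFinset] at hn
  set f : V → ℝ := fun n => ((branch T c n ∩ Q).card : ℝ) with hf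
  set wc : ℝ := ((({c} : Finset V) ∩ Q).card : ℝ) with hwcdef
  have hwc : 0 ≤ wc := by positivity
  have hfull : part T c s = Finset.univ := by
    rw [Finset.eq_univ_iff_forall]
    intro x
    rw [mem_part_iff]
    by_cases hx : x = c
    · exact Or.inl hx
    · obtain ⟨n, hn, hb⟩ := exists_branch hT hx
      exact Or.inr ⟨n, by rwa [SimpleGraph.mem_neighborFinset], hb⟩
  have hcount : ∀ N : Finset V, N ⊆ s →
      ((part T c N ∩ Q).card : ℝ) = wc + ∑ n ∈ N, f n := by
    intro N hN
    have := card_part_inter hT (fun n hn => hadj n (hN hn)) Q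
    rw [this]
    push_cast
    ring
  have htotal : ∑ n ∈ s, f n + wc = (Q.card : ℝ) := by
    have := hcount s (Finset.Subset.refl _)
    rw [hfull, Finset.univ_inter] at this
    linarith
  have hhalf : ∀ n ∈ s, f n ≤ (Q.card : ℝ) / 2 := by
    intro n hn
    have := branch_card_le hT Q (fun v => hcmin v (Finset.mem_univ v)) (hadj n hn)
    show ((branch T c n ∩ Q).card : ℝ) ≤ (Q.card : ℝ) / 2
    rw [le_div_iff₀ (by norm_num : (0:ℝ) < 2)]
    have h2 : ((2 * (branch T c n ∩ Q).card : ℕ) : ℝ) ≤ ((Q.card : ℕ) : ℝ) := by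
      exact_mod_cast this
    push_cast at h2
    linarith
  obtain ⟨A, hAs, hA1, hA2⟩ := greedy f (Q.card : ℝ) wc hwc s
    (fun i _ => by positivity) hhalf htotal
  have hAs' : s \ A ⊆ s := Finset.sdiff_subset
  refine ⟨part T c A, part T c (s \ A),
    part_connected hT (fun n hn => hadj n (hAs hn)),
    part_connected hT (fun n hn => hadj n (hAs' hn)), ?_, ?_, ?_, ?_, ?_⟩
  · -- union
    rw [Finset.eq_univ_iff_forall]
    intro x
    rw [Finset.mem_union, mem_part_iff, mem_part_iff]
    by_cases hx : x = c
    · exact Or.inl (Or.inl hx)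
    · obtain ⟨n, hn, hb⟩ := exists_branch hT hx
      have hns : n ∈ s := by rwa [SimpleGraph.mem_neighborFinset]
      by_cases hnA : n ∈ A
      · exact Or.inl (Or.inr ⟨n, hnA, hb⟩)
      · exact Or.inr (Or.inr ⟨n, Finset.mem_sdiff.mpr ⟨hns, hnA⟩, hb⟩)
  · -- intersection card
    have : part T c A ∩ part T c (s \ A) = {c} := by
      ext x
      rw [Finset.mem_inter, Finset.mem_singleton, mem_part_iff, mem_part_iff]
      constructor
      · rintro ⟨h1 | ⟨n, hn, hb⟩, h2⟩
        · exact h1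
        · rcases h2 with h2 | ⟨n', hn', hb'⟩
          · exact h2
          · exfalso
            have : n = n' := branch_disjoint hT (hadj n (hAs hn))
              (hadj n' (hAs' hn')) hb hb'
            subst this
            exact (Finset.mem_sdiff.mp hn').2 hn
      · rintro rfl
        exact ⟨Or.inl rfl, Or.inl rfl⟩
    rw [this, Finset.card_singleton]
  · -- edges
    intro u v huv
    by_cases hu : u = c
    · subst hu
      have hvb : v ∈ branch T u v := nbr_mem_branch hT huv
      have hvs : v ∈ s := by rwa [SimpleGraph.mem_neighborFinset]
      by_cases hvA : v ∈ A
      · exact Or.inl ⟨c_mem_part, mem_part_of_branch hvA hvb⟩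
      · exact Or.inr ⟨c_mem_part,
          mem_part_of_branch (Finset.mem_sdiff.mpr ⟨hvs, hvA⟩) hvb⟩
    · by_cases hv : v = c
      · subst hv
        have hub : u ∈ branch T v u := nbr_mem_branch hT huv.symm
        have hus : u ∈ s := by rwa [SimpleGraph.mem_neighborFinset, adj_comm]
        by_cases huA : u ∈ A
        · exact Or.inl ⟨mem_part_of_branch huA hub, c_mem_part⟩
        · exact Or.inr ⟨mem_part_of_branch (Finset.mem_sdiff.mpr ⟨hus, huA⟩) hub,
            c_mem_part⟩
      · obtain ⟨m, hm, hum⟩ := exists_branch hT hu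
        obtain ⟨n, hn, hvn⟩ := exists_branch hT hv
        obtain rfl : m = n := adj_same_branch hT huv hm hn hum hvn
        have hms : m ∈ s := by rwa [SimpleGraph.mem_neighborFinset]
        by_cases hmA : m ∈ A
        · exact Or.inl ⟨mem_part_of_branch hmA hum, mem_part_of_branch hmA hvn⟩
        · have hmB : m ∈ s \ A := Finset.mem_sdiff.mpr ⟨hms, hmA⟩
          exact Or.inr ⟨mem_part_of_branch hmB hum, mem_part_of_branch hmB hvn⟩
  · -- weight S₁
    rw [hcount A hAs]
    linarith
  · -- weight S₂
    rw [hcount (s \ A) hAs']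
    have hsd : ∑ n ∈ s \ A, f n + ∑ n ∈ A, f n = ∑ n ∈ s, f n :=
      Finset.sum_sdiff hAs
    linarith
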